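/- Combined soundness and completeness of commandification: under the algorithm's requirements with uncontrollable-variable set X, for every initial assignment σ0 with domain X mapping each x ∈ X to a datum: (i) if execution of the generated command π from σ0 terminates successfully in state σ, then σ ⊨ ℓ1 ∧ ⋯ ∧ ℓ_{n+m} and σ0 ⊆ σ; and (ii) if there exists σ' with σ' ⊨ ℓ1 ∧ ⋯ ∧ ℓ_{n+m} and σ0 ⊆ σ', then execution of π from σ0 terminates successfully. -/

import Mathlib

/-- Data terms over variables `V` and data `D`. -/
inductive DTerm (V D : Type) where
  | var : V → DTerm V D
  | const : D → DTerm V D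
  | app : (List D → D) → List (DTerm V D) → DTerm V D

/-- Data atoms. -/
inductive Atom (V D : Type) where
  | bot : Atom V D
  | top : Atom V D
  | eq : DTerm V D → DTerm V D → Atom V D
  | rel : (List D → Prop) → List (DTerm V D) → Atom V D

/-- Data literals: atoms or negated atoms. -/
inductive Lit (V D : Type) where
  | pos : Atom V D → Lit V D
  | neg : Atom V D → Lit V D

/-- Data constraints: existential quantifications over a conjunction of literals. -/
inductive DC (V D : Type) where
  | ex : V → DC V D → DC V D
  | conj : List (Lit V D) → DC V D

/-- Data assignments: partial functions from variables to data (`none` = nil). -/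
abbrev Assg (V D : Type) := V → Option D

/-- Term evaluation; returns `none` (nil) if some variable is undefined. -/
def evalT (σ : Assg V D) : DTerm V D → Option D
  | .var x => σ x
  | .const d => some d
  | .app f ts => (ts.attach.mapM (fun t => evalT σ t.1)).map f
decreasing_by simp only [DTerm.app.sizeOf_spec]; have := List.sizeOf_lt_of_mem t.2; omega

/-- Variables of a term. -/
def varsT : DTerm V D → List V
  | .var x => [x]
  | .const _ => []
  | .app _ ts => ts.attach.flatMap (fun t => varsT t.1)
decreasing_by simp only [DTerm.app.sizeOf_spec]; have := List.sizeOf_lt_of_mem t.2; omega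

def varsA : Atom V D → List V
  | .bot => []
  | .top => []
  | .eq t1 t2 => varsT t1 ++ varsT t2
  | .rel _ ts => ts.flatMap varsT

def varsL : Lit V D → List V
  | .pos a => varsA a
  | .neg a => varsA a

/-- Free variables of a data constraint. -/
def freeDC [DecidableEq V] : DC V D → List V
  | .ex y φ => (freeDC φ).filter (fun z => z ≠ y)
  | .conj ls => ls.flatMap varsL

/-- Variables occurring (in atoms of) a data constraint. -/
def varsDC : DC V D → List V
  | .ex _ φ => varsDC φ
  | .conj ls => ls.flatMap varsL

/-- Bound variables (quantifier prefix) of a data constraint. -/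
def boundDC : DC V D → List V
  | .ex y φ => y :: boundDC φ
  | .conj _ => []

/-- Literals of the conjunctive kernel of a data constraint. -/
def lits : DC V D → List (Lit V D)
  | .ex _ φ => lits φ
  | .conj ls => ls

def symmEq : Lit V D → Option (Lit V D)
  | .pos (.eq t1 t2) => some (.pos (.eq t2 t1))
  | _ => none

/-- ≐-symmetric closure of the kernel literals. -/
def litsym (φ : DC V D) : List (Lit V D) := lits φ ++ (lits φ).filterMap symmEq

/-- Satisfaction of atoms. -/
def satA (σ : Assg V D) : Atom V D → Prop
  | .bot => False
  | .top => True
  | .eq t1 t2 => ∃ d, evalT σ t1 = some d ∧ evalT σ t2 = some d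
  | .rel R ts => ∃ ds, ts.mapM (evalT σ) = some ds ∧ R ds

/-- Satisfaction of literals. -/
def satL (σ : Assg V D) : Lit V D → Prop
  | .pos a => satA σ a
  | .neg a => (∀ x ∈ varsA a, (σ x).isSome) ∧ ¬ satA σ a

/-- Entailment of data constraints. -/
def sat [DecidableEq V] (σ : Assg V D) : DC V D → Prop
  | .ex x φ => ∃ d : D, sat (Function.update σ x (some d)) φ
  | .conj ls => ∀ l ∈ ls, satL σ l

open Classical in
/-- Restriction of an assignment to a set of variables. -/
noncomputable def restrict (σ : Assg V D) (X : Set V) : Assg V D :=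
  fun x => if x ∈ X then σ x else none

/-- Substitution in terms. -/
def substT [DecidableEq V] (x : V) (t : DTerm V D) : DTerm V D → DTerm V D
  | .var y => if y = x then t else .var y
  | .const d => .const d
  | .app f ts => .app f (ts.attach.map (fun s => substT x t s.1))
decreasing_by simp only [DTerm.app.sizeOf_spec]; have := List.sizeOf_lt_of_mem s.2; omega

def substA [DecidableEq V] (x : V) (t : DTerm V D) : Atom V D → Atom V D
  | .bot => .bot
  | .top => .top
  | .eq t1 t2 => .eq (substT x t t1) (substT x t t2)
  | .rel R ts => .rel R (ts.map (substT x t))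

def substL [DecidableEq V] (x : V) (t : DTerm V D) : Lit V D → Lit V D
  | .pos a => .pos (substA x t a)
  | .neg a => .neg (substA x t a)

/-- Capture-free substitution in data constraints (skipping under a binder of the same name). -/
def substDC [DecidableEq V] (x : V) (t : DTerm V D) : DC V D → DC V D
  | .ex y φ => if y = x then .ex y φ else .ex y (substDC x t φ)
  | .conj ls => .conj (ls.map (substL x t))

/-- Determinants of a variable in an atom. -/
def detA [DecidableEq V] (x : V) : Atom V D → List (DTerm V D)
  | .eq t1 t2 =>
      (match t1 with
        | .var y => if y = x ∧ x ∉ varsT t2 then [t2] else []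
        | _ => []) ++
      (match t2 with
        | .var y => if y = x ∧ x ∉ varsT t1 then [t1] else []
        | _ => [])
  | _ => []

def detL [DecidableEq V] (x : V) : Lit V D → List (DTerm V D)
  | .pos a => detA x a
  | .neg _ => []

/-- Determinants of a variable in a data constraint. -/
def detDC [DecidableEq V] (x : V) : DC V D → List (DTerm V D)
  | .ex y φ => if y = x then [] else detDC x φ
  | .conj ls => ls.flatMap (detL x)

/-- Syntactic existential quantification: substitute the least determinant if one exists. -/
def exFun [DecidableEq V] (x : V) (φ : DC V D) : DC V D :=
  match detDC x φ with
  | [] => .ex x φ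
  | t :: _ => substDC x t φ

/-- Constraint automata over states `Q`, variables `V` (ports and pre/post memory variables)
and data `D`. -/
structure CA (Q V D : Type) where
  states : Set Q
  Pall : Set V
  Pin : Set V
  Pout : Set V
  preM : Set V
  postM : Set V
  trans : Set (Q × Set V × DC V D × Q)
  init : Q

/-- Data constraints occurring on transitions. -/
def CA.dcs (A : CA Q V D) : Set (DC V D) :=
  {φ | ∃ q P q', (q, P, φ, q') ∈ A.trans}

/-- Hide a port: remove it from the port sets and existentially quantify it in data constraints. -/
def CA.hide (A : CA Q V D) (p : V) : CA Q V D :=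
  { A with
    Pall := A.Pall \ {p}, Pin := A.Pin \ {p}, Pout := A.Pout \ {p},
    trans := (fun tr => (tr.1, tr.2.1 \ {p}, DC.ex p tr.2.2.1, tr.2.2.2)) '' A.trans }

/-- Eliminate a port: remove it from the port sets and apply syntactic existential
quantification to data constraints. -/
def CA.elim [DecidableEq V] (A : CA Q V D) (p : V) : CA Q V D :=
  { A with
    Pall := A.Pall \ {p}, Pin := A.Pin \ {p}, Pout := A.Pout \ {p},
    trans := (fun tr => (tr.1, tr.2.1 \ {p}, exFun p tr.2.2.1, tr.2.2.2)) '' A.trans }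

open Classical in
/-- Substitute a data constraint `φ'` for every occurrence of `φ` on transitions. -/
noncomputable def CA.substCA (A : CA Q V D) (φ φ' : DC V D) : CA Q V D :=
  { A with
    trans := (fun tr => (tr.1, tr.2.1, if tr.2.2.1 = φ then φ' else tr.2.2.1, tr.2.2.2)) '' A.trans }

/-- Data commands. -/
inductive Cmd (V D : Type) where
  | skip : Cmd V D
  | nil : Cmd V D                       -- the empty command ε
  | assign : V → DTerm V D → Cmd V D
  | guard : DC V D → Cmd V D → Cmd V D  -- failure statement φ → π
  | seq : Cmd V D → Cmd V D → Cmd V D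

/-- Small-step semantics on configurations; the state `none` is the fail state. -/
inductive Step [DecidableEq V] :
    Cmd V D × Option (Assg V D) → Cmd V D × Option (Assg V D) → Prop where
  | skip {σ : Assg V D} : Step (.skip, some σ) (.nil, some σ)
  | assign {x t} {σ : Assg V D} :
      Step (.assign x t, some σ) (.nil, some (Function.update σ x (evalT σ t)))
  | guardT {φ π} {σ : Assg V D} : sat σ φ → Step (.guard φ π, some σ) (π, some σ)
  | guardF {φ π} {σ : Assg V D} : ¬ sat σ φ → Step (.guard φ π, some σ) (.nil, none)
  | seqStep {π π' π''} {σ σ' : Assg V D} :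
      Step (π, some σ) (π', some σ') → π' ≠ .nil →
      Step (.seq π π'', some σ) (.seq π' π'', some σ')
  | seqDone {π π''} {σ σ' : Assg V D} :
      Step (π, some σ) (.nil, some σ') → Step (.seq π π'', some σ) (π'', some σ')
  | seqFail {π π' π''} {σ : Assg V D} :
      Step (π, some σ) (π', none) → Step (.seq π π'', some σ) (.nil, none)

/-- Reflexive-transitive closure of the small-step semantics. -/
def Steps [DecidableEq V] :
    Cmd V D × Option (Assg V D) → Cmd V D × Option (Assg V D) → Prop :=
  Relation.ReflTransGen Step

/-- Partial-correctness semantics: successfully reachable final states. -/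
def final [DecidableEq V] (π : Cmd V D) (S : Set (Assg V D)) : Set (Assg V D) :=
  {σ' | ∃ σ ∈ S, Steps (π, some σ) (.nil, some σ')}

/-- Total-correctness semantics: additionally contains `none` (fail) if some execution fails. -/
def finalFail [DecidableEq V] (π : Cmd V D) (S : Set (Assg V D)) : Set (Option (Assg V D)) :=
  (some '' final π S) ∪
    {ς | ς = none ∧ ∃ σ ∈ S, ∃ π', Steps (π, some σ) (π', none)}

/-- Partial-correctness Hoare proof system (assertions as sets of assignments). -/
inductive HoareP [DecidableEq V] : Set (Assg V D) → Cmd V D → Set (Assg V D) → Prop where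
  | skip {P} : HoareP P .skip P
  | assign {P : Set (Assg V D)} {x t} :
      HoareP {σ | Function.update σ x (evalT σ t) ∈ P} (.assign x t) P
  | seq {P1 Pm P2 π1 π2} : HoareP P1 π1 Pm → HoareP Pm π2 P2 → HoareP P1 (.seq π1 π2) P2
  | cons {P1 P1' P2 P2' π} : HoareP P1' π P2' → P1 ⊆ P1' → P2' ⊆ P2 → HoareP P1 π P2
  | guard {P P' φ π} : HoareP (P ∩ {σ | sat σ φ}) π P' → HoareP P (.guard φ π) P'

/-- Total-correctness Hoare proof system. -/
inductive HoareT [DecidableEq V] : Set (Assg V D) → Cmd V D → Set (Assg V D) → Prop where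
  | skip {P} : HoareT P .skip P
  | assign {P : Set (Assg V D)} {x t} :
      HoareT {σ | Function.update σ x (evalT σ t) ∈ P} (.assign x t) P
  | seq {P1 Pm P2 π1 π2} : HoareT P1 π1 Pm → HoareT Pm π2 P2 → HoareT P1 (.seq π1 π2) P2
  | cons {P1 P1' P2 P2' π} : HoareT P1' π P2' → P1 ⊆ P1' → P2' ⊆ P2 → HoareT P1 π P2
  | guard {P P' φ π} :
      HoareT P π P' → P ⊆ {σ | sat σ φ} → HoareT P (.guard φ π) P'
  | decomp {P P1 P2 π} : HoareP P π P1 → HoareT P π P2 → HoareT P π (P1 ∩ P2)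

/-- The literal `x ≐ t`. -/
def eqLit (x : V) (t : DTerm V D) : Lit V D := .pos (.eq (.var x) t)

/-- A single-literal data constraint. -/
def litDC (l : Lit V D) : DC V D := .conj [l]

open Classical in
/-- Translation of the ordered equalities: assignment if the variable is fresh,
failure statement otherwise. -/
noncomputable def commEqs [DecidableEq V] (X : Set V) :
    List V → List (V × DTerm V D) → Cmd V D
  | _, [] => .skip
  | done, (x, t) :: rest =>
      .seq (if x ∈ X ∨ x ∈ done then .guard (litDC (eqLit x t)) .skip else .assign x t)
           (commEqs X (x :: done) rest)

/-- Translation of remaining literals into failure statements. -/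
def commRest : List (Lit V D) → Cmd V D
  | [] => .skip
  | l :: rest => .seq (.guard (litDC l) .skip) (commRest rest)

/-- Commandification: output of Algorithm 1 on the linearized literals. -/
noncomputable def commandify [DecidableEq V] (X : Set V)
    (eqs : List (V × DTerm V D)) (rest : List (Lit V D)) : Cmd V D :=
  .seq (commEqs X [] eqs) (commRest rest)

/-- The full literal list `ℓ1, …, ℓ_{n+m}` of a commandification problem. -/
def commLits (eqs : List (V × DTerm V D)) (rest : List (Lit V D)) : List (Lit V D) :=
  eqs.map (fun p => eqLit p.1 p.2) ++ rest

/-- Requirements of the commandification algorithm: the first `n` literals are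
equalities `x_i ≐ t_i` linearized so that all dependencies of each `t_i` are either
uncontrollable (in `X`) or assigned earlier, and every variable outside `X` occurs
among `x_1, …, x_n`. -/
def CommReq [DecidableEq V] (X : Set V)
    (eqs : List (V × DTerm V D)) (rest : List (Lit V D)) : Prop :=
  (∀ l ∈ commLits eqs rest, ∀ y ∈ varsL l, y ∈ X ∨ y ∈ eqs.map Prod.fst) ∧
  (∀ i (h : i < eqs.length), ∀ y ∈ varsT (eqs.get ⟨i, h⟩).2,
      y ∈ X ∨ y ∈ (eqs.take i).map Prod.fst)

/-- B-graphs: hypergraphs whose b-arcs have a set of tails and one head. -/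
structure BGraph (V : Type) where
  arcs : Set (Set V × V)

/-- The single-tailed arc relation obtained by splitting b-arcs. -/
def BGraph.rel (G : BGraph V) (a b : V) : Prop := ∃ T, (T, b) ∈ G.arcs ∧ a ∈ T

/-- Layers of the greedy exploration from the root. -/
def BGraph.layer (G : BGraph V) (root : V) : ℕ → Set V
  | 0 => {root}
  | n + 1 => G.layer root n ∪ {v | ∃ T, (T, v) ∈ G.arcs ∧ T ⊆ G.layer root n}

/-- Relation induced by a choice of one incoming b-arc per vertex. -/
def chosenRel (choice : V → Option (Set V)) (a b : V) : Prop :=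
  ∃ T, choice b = some T ∧ a ∈ T

/-- A ⋆-arborescence: one incoming b-arc per non-root vertex, acyclically. -/
def IsArbor (G : BGraph V) (root : V) (choice : V → Option (Set V)) : Prop :=
  choice root = none ∧
  (∀ v, v ≠ root → ∃ T, choice v = some T ∧ (T, v) ∈ G.arcs) ∧
  (∀ v, ¬ Relation.TransGen (chosenRel choice) v v)

/-- The data relation encoding a data command `π` run from initial states over `X`,
recording the values of the variables `xs`. -/
def cmdRel [DecidableEq V] (π : Cmd V D) (X : Set V) (xs : List V) (ds : List D) : Prop :=
  ∃ σ0 σ : Assg V D, (∀ x ∈ X, (σ0 x).isSome) ∧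
    Steps (π, some σ0) (.nil, some σ) ∧ xs.map σ = ds.map some

open Classical in
/-- `commfun`: encode the commandification of `φ` as a data relation applied to the
ordered free variables of `φ`, when the B-graph of `φ` over `X` has a ⋆-arborescence
and `X ⊆ free(φ)`; otherwise leave `φ` unchanged.  The algorithm producing the data
command and the arborescence test are parameters `alg` and `hasArb`. -/
noncomputable def commfun [LinearOrder V] (alg : DC V D → Set V → Cmd V D)
    (hasArb : DC V D → Set V → Prop) (φ : DC V D) (X : Set V) : DC V D :=
  let xs := (freeDC φ).toFinset.sort (· ≤ ·)
  if hasArb φ X ∧ X ⊆ {x | x ∈ freeDC φ} then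
    .conj [.pos (.rel (fun ds => cmdRel (alg φ X) X xs ds) (xs.map .var))]
  else φ

/-- The uncontrollable variables of a data constraint in an automaton. -/
def CA.uncontr [DecidableEq V] (A : CA Q V D) (φ : DC V D) : Set V :=
  {x | x ∈ freeDC φ} ∩ (A.Pin ∪ A.preM)

/-- Commandify an automaton. -/
noncomputable def CA.comm [LinearOrder V] (A : CA Q V D)
    (alg : DC V D → Set V → Cmd V D) (hasArb : DC V D → Set V → Prop) : CA Q V D :=
  { A with
    trans := (fun tr =>
      (tr.1, tr.2.1, commfun alg hasArb tr.2.2.1 (A.uncontr tr.2.2.1), tr.2.2.2)) '' A.trans }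

set_option linter.unusedSectionVars false
section Aux
variable {V D : Type} [DecidableEq V]

/-- Auxiliary: extension order on assignments. -/
def ExtA (σ σ' : Assg V D) : Prop := ∀ x d, σ x = some d → σ' x = some d

lemma mapM_mono {α β : Type} {l : List α} {f g : α → Option β}
    (h : ∀ a ∈ l, ∀ b, f a = some b → g a = some b) :
    ∀ {bs}, l.mapM f = some bs → l.mapM g = some bs := by
  induction l with
  | nil => intro bs hbs; simpa using hbs
  | cons a l ih =>
    intro bs hbs
    simp only [List.mapM_cons, Option.pure_def, Option.bind_eq_bind, Option.bind_eq_some_iff,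
      Option.some.injEq] at hbs ⊢
    obtain ⟨b, hb, bs', hbs', rfl⟩ := hbs
    exact ⟨b, h a (by simp) b hb, bs', ih (fun a ha => h a (by simp [ha])) hbs', rfl⟩

lemma mapM_isSome {α β : Type} {l : List α} {f : α → Option β}
    (h : ∀ a ∈ l, ∃ b, f a = some b) : ∃ bs, l.mapM f = some bs := by
  induction l with
  | nil => exact ⟨[], rfl⟩
  | cons a l ih =>
    obtain ⟨b, hb⟩ := h a (by simp)
    obtain ⟨bs, hbs⟩ := ih (fun a ha => h a (by simp [ha]))
    exact ⟨b :: bs, by simp only [List.mapM_cons, Option.pure_def, Option.bind_eq_bind,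
      Option.bind_eq_some_iff, Option.some.injEq]; exact ⟨b, hb, bs, hbs, rfl⟩⟩

theorem evalT_mono {σ σ' : Assg V D} (hext : ExtA σ σ') :
    ∀ (t : DTerm V D) (d : D), evalT σ t = some d → evalT σ' t = some d
  | .var x, d, h => by rw [evalT] at h ⊢; exact hext x d h
  | .const c, d, h => by simpa [evalT] using h
  | .app f ts, d, h => by
    rw [evalT] at h ⊢
    obtain ⟨ds, hds, rfl⟩ := Option.map_eq_some_iff.1 h
    rw [mapM_mono (fun a _ b hb => evalT_mono hext a.1 b hb) hds]
    rfl
decreasing_by simp only [DTerm.app.sizeOf_spec]; have := List.sizeOf_lt_of_mem a.2; omega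

theorem evalT_total {σ : Assg V D} :
    ∀ (t : DTerm V D), (∀ x ∈ varsT t, (σ x).isSome) → ∃ d, evalT σ t = some d
  | .var x, h => by
    have := h x (by simp [varsT])
    rw [Option.isSome_iff_exists] at this
    simpa [evalT] using this
  | .const c, _ => ⟨c, by simp [evalT]⟩
  | .app f ts, h => by
    rw [evalT]
    have : ∀ a ∈ ts.attach, ∃ b, evalT σ a.1 = some b := by
      intro a _
      refine evalT_total a.1 (fun x hx => h x ?_)
      simp only [varsT, List.mem_flatMap]
      exact ⟨a, List.mem_attach _ _, hx⟩
    obtain ⟨ds, hds⟩ := mapM_isSome this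
    exact ⟨f ds, by rw [hds]; rfl⟩
decreasing_by simp only [DTerm.app.sizeOf_spec]; have := List.sizeOf_lt_of_mem a.2; omega

end Aux
set_option linter.unusedSectionVars false
section Aux2
variable {V D : Type} [DecidableEq V]

theorem satA_mono {σ σ' : Assg V D} (hext : ExtA σ σ') {a : Atom V D}
    (h : satA σ a) : satA σ' a := by
  cases a with
  | bot => exact h.elim
  | top => trivial
  | eq t1 t2 =>
    obtain ⟨d, h1, h2⟩ := h
    exact ⟨d, evalT_mono hext t1 d h1, evalT_mono hext t2 d h2⟩
  | rel R ts =>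
    obtain ⟨ds, hds, hR⟩ := h
    exact ⟨ds, mapM_mono (fun t _ b hb => evalT_mono hext t b hb) hds, hR⟩

theorem satL_mono_pos {σ σ' : Assg V D} (hext : ExtA σ σ') {a : Atom V D}
    (h : satL σ (.pos a)) : satL σ' (.pos a) := satA_mono hext h

theorem satL_restrict {σ σ' : Assg V D} (hext : ExtA σ σ') {l : Lit V D}
    (hvars : ∀ x ∈ varsL l, (σ x).isSome) (h : satL σ' l) : satL σ l := by
  cases l with
  | pos a =>
    cases a with
    | bot => exact h.elim
    | top => trivial
    | eq t1 t2 =>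
      obtain ⟨d1, hd1⟩ := evalT_total t1 (fun x hx => hvars x (by simp [varsL, varsA, hx]))
      obtain ⟨d2, hd2⟩ := evalT_total t2 (fun x hx => hvars x (by simp [varsL, varsA, hx]))
      obtain ⟨c, hc1, hc2⟩ := h
      rw [evalT_mono hext t1 d1 hd1] at hc1
      rw [evalT_mono hext t2 d2 hd2] at hc2
      cases hc1; cases hc2
      exact ⟨d1, hd1, hd2⟩
    | rel R ts =>
      have : ∀ t ∈ ts, ∃ b, evalT σ t = some b := by
        intro t ht
        exact evalT_total t (fun x hx => hvars x (by
          simp only [varsL, varsA, List.mem_flatMap]; exact ⟨t, ht, hx⟩))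
      obtain ⟨ds, hds⟩ := mapM_isSome this
      obtain ⟨ds', hds', hR⟩ := h
      rw [mapM_mono (fun t _ b hb => evalT_mono hext t b hb) hds] at hds'
      cases hds'
      exact ⟨ds, hds, hR⟩
  | neg a =>
    exact ⟨fun x hx => hvars x hx, fun hs => h.2 (satA_mono hext hs)⟩

theorem sat_litDC {σ : Assg V D} {l : Lit V D} : sat σ (litDC l) ↔ satL σ l := by
  simp [sat, litDC]

theorem satL_eqLit {σ : Assg V D} {x : V} {t : DTerm V D} :
    satL σ (eqLit x t) ↔ ∃ d, σ x = some d ∧ evalT σ t = some d := by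
  simp only [eqLit, satL, satA]
  constructor <;> (rintro ⟨d, h1, h2⟩; rw [evalT] at *; exact ⟨d, h1, h2⟩)

end Aux2
set_option linter.unusedSectionVars false
section Aux3
variable {V D : Type} [DecidableEq V]

lemma step_nil {s : Option (Assg V D)} {c} : ¬ Step (.nil, s) c := by
  intro h; cases h

lemma step_none {π : Cmd V D} {c} : ¬ Step (π, none) c := by
  intro h; cases h

lemma steps_nil {s : Option (Assg V D)} {c} (h : Steps (.nil, s) c) : c = (.nil, s) := by
  rcases Relation.ReflTransGen.cases_head h with h' | ⟨b, hb, _⟩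
  · exact h'.symm
  · exact absurd hb step_nil

lemma steps_none {π : Cmd V D} {c} (h : Steps (π, none) c) : c = (π, none) := by
  rcases Relation.ReflTransGen.cases_head h with h' | ⟨b, hb, _⟩
  · exact h'.symm
  · exact absurd hb step_none

lemma skip_inv {σ σ' : Assg V D} (h : Steps (.skip, some σ) (.nil, some σ')) : σ' = σ := by
  rcases Relation.ReflTransGen.cases_head h with h' | ⟨b, hb, htail⟩
  · simp at h'
  · cases hb; have := steps_nil htail; simp_all

lemma assign_inv {x t} {σ σ' : Assg V D}
    (h : Steps (.assign x t, some σ) (.nil, some σ')) :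
    σ' = Function.update σ x (evalT σ t) := by
  rcases Relation.ReflTransGen.cases_head h with h' | ⟨b, hb, htail⟩
  · simp at h'
  · cases hb; have := steps_nil htail; simp_all

lemma guard_skip_inv {φ : DC V D} {σ σ' : Assg V D}
    (h : Steps (.guard φ .skip, some σ) (.nil, some σ')) : sat σ φ ∧ σ' = σ := by
  rcases Relation.ReflTransGen.cases_head h with h' | ⟨b, hb, htail⟩
  · simp at h'
  · cases hb with
    | guardT hs => exact ⟨hs, skip_inv htail⟩
    | guardF hs => have := steps_nil htail; simp_all

lemma seq_inv : ∀ {c : Cmd V D × Option (Assg V D)} {σ' : Assg V D},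
    Steps c (.nil, some σ') → ∀ π1 π2 (σ : Assg V D), c = (.seq π1 π2, some σ) →
    ∃ σ1, Steps (π1, some σ) (.nil, some σ1) ∧ Steps (π2, some σ1) (.nil, some σ') := by
  intro c σ' h
  induction h using Relation.ReflTransGen.head_induction_on with
  | refl => intro π1 π2 σ h'; simp at h'
  | head hstep htail ih =>
    intro π1 π2 σ h'
    subst h'
    cases hstep with
    | seqStep h1 hne =>
      obtain ⟨σ1, ha, hb⟩ := ih _ _ _ rfl
      exact ⟨σ1, Relation.ReflTransGen.head h1 ha, hb⟩
    | seqDone h1 => exact ⟨_, Relation.ReflTransGen.single h1, htail⟩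
    | seqFail h1 => have := steps_nil htail; simp_all

lemma lift_seq : ∀ {c c' : Cmd V D × Option (Assg V D)}, Steps c c' →
    ∀ π1 (σ σ1 : Assg V D), c = (π1, some σ) → c' = (.nil, some σ1) → π1 ≠ .nil →
    ∀ π2, Steps (.seq π1 π2, some σ) (π2, some σ1) := by
  intro c c' h
  induction h using Relation.ReflTransGen.head_induction_on with
  | refl =>
    intro π1 σ σ1 h1 h2 hne π2
    rw [h2] at h1; simp at h1; exact absurd h1.1.symm hne
  | @head a b hstep htail ih =>
    intro π1 σ σ1 h1 h2 hne π2
    subst h1; subst h2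
    obtain ⟨π', s'⟩ := b
    cases s' with
    | none => exact absurd (steps_none htail) (by simp)
    | some σ'' =>
      rcases eq_or_ne π' Cmd.nil with rfl | hne'
      · have := steps_nil htail
        simp only [Prod.mk.injEq, Option.some.injEq] at this
        rw [this.2]
        exact Relation.ReflTransGen.single (Step.seqDone hstep)
      · exact Relation.ReflTransGen.head (Step.seqStep hstep hne') (ih _ _ _ rfl rfl hne' π2)

lemma compose_seq {π1 π2 : Cmd V D} {σ σ1 σ2 : Assg V D} (hne : π1 ≠ .nil)
    (h1 : Steps (π1, some σ) (.nil, some σ1)) (h2 : Steps (π2, some σ1) (.nil, some σ2)) :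
    Steps (.seq π1 π2, some σ) (.nil, some σ2) :=
  Relation.ReflTransGen.trans (lift_seq h1 π1 σ σ1 rfl rfl hne π2) h2

end Aux3
set_option linter.unusedSectionVars false
section Aux4
variable {V D : Type} [DecidableEq V]

lemma commEqs_ne_nil {X : Set V} {done : List V} {eqs' : List (V × DTerm V D)} :
    commEqs X done eqs' ≠ .nil := by
  cases eqs' <;> simp [commEqs]

lemma commRest_ne_nil {ls : List (Lit V D)} : commRest ls ≠ .nil := by
  cases ls <;> simp [commRest]

/-- Inversion of successful runs of `commEqs`. -/
lemma commEqs_inv (X : Set V) :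
    ∀ (eqs' : List (V × DTerm V D)) (done : List V) (σ σf : Assg V D),
    (∀ x, (σ x).isSome ↔ (x ∈ X ∨ x ∈ done)) →
    (∀ i (h : i < eqs'.length), ∀ y ∈ varsT (eqs'.get ⟨i, h⟩).2,
        y ∈ X ∨ y ∈ done ∨ y ∈ (eqs'.take i).map Prod.fst) →
    Steps (commEqs X done eqs', some σ) (.nil, some σf) →
    (∀ p ∈ eqs', satL σf (eqLit p.1 p.2)) ∧ ExtA σ σf ∧
    (∀ x, (σf x).isSome ↔ (x ∈ X ∨ x ∈ done ∨ x ∈ eqs'.map Prod.fst)) := by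
  intro eqs'
  induction eqs' with
  | nil =>
    intro done σ σf hdom _ hrun
    rw [commEqs] at hrun
    have := skip_inv hrun
    subst this
    exact ⟨by simp, fun x d h => h, fun x => by rw [hdom x]; simp⟩
  | cons p tl ih =>
    obtain ⟨x, t⟩ := p
    intro done σ σf hdom hvars hrun
    rw [commEqs] at hrun
    obtain ⟨σ1, h1, h2⟩ := seq_inv hrun _ _ _ rfl
    have hv0 : ∀ y ∈ varsT t, y ∈ X ∨ y ∈ done := by
      intro y hy
      have := hvars 0 (by simp) y hy
      simpa using this
    have hvtl : ∀ i (h : i < tl.length), ∀ y ∈ varsT (tl.get ⟨i, h⟩).2,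
        y ∈ X ∨ y ∈ x :: done ∨ y ∈ (tl.take i).map Prod.fst := by
      intro i h y hy
      have := hvars (i + 1) (by simpa using Nat.succ_lt_succ h) y (by simpa using hy)
      simp only [List.take_succ_cons, List.map_cons, List.mem_cons] at this ⊢
      tauto
    by_cases hx : x ∈ X ∨ x ∈ done
    · rw [if_pos hx] at h1
      obtain ⟨hsat, rfl⟩ := guard_skip_inv h1
      have hsatx : satL σ1 (eqLit x t) := sat_litDC.1 hsat
      have hdom' : ∀ y, (σ1 y).isSome ↔ (y ∈ X ∨ y ∈ x :: done) := by
        intro y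
        rw [hdom y]
        simp only [List.mem_cons]
        constructor
        · tauto
        · rintro (h | rfl | h) <;> tauto
      obtain ⟨hsattl, hext, hdomf⟩ := ih (x :: done) σ1 σf hdom' hvtl h2
      refine ⟨?_, hext, ?_⟩
      · intro p hp
        rcases List.mem_cons.1 hp with rfl | hp
        · exact satL_mono_pos hext hsatx
        · exact hsattl p hp
      · intro y
        rw [hdomf y]
        simp only [List.mem_cons, List.map_cons]
        tauto
    · rw [if_neg hx] at h1
      push_neg at hx
      have hσ1 := assign_inv h1
      obtain ⟨d, hd⟩ := evalT_total t (fun y hy => (hdom y).2 (hv0 y hy))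
      have hσx : σ x = none := by
        rw [← Option.not_isSome_iff_eq_none, hdom x]
        tauto
      have hσ1x : σ1 x = some d := by rw [hσ1, hd]; simp
      have hext1 : ExtA σ σ1 := by
        intro y d' hyd
        rcases eq_or_ne y x with rfl | hne
        · rw [hσx] at hyd; exact absurd hyd (by simp)
        · rw [hσ1, Function.update_of_ne hne]; exact hyd
      have hdom' : ∀ y, (σ1 y).isSome ↔ (y ∈ X ∨ y ∈ x :: done) := by
        intro y
        rcases eq_or_ne y x with rfl | hne
        · simp [hσ1x]
        · rw [hσ1, Function.update_of_ne hne, hdom y]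
          simp only [List.mem_cons]
          tauto
      have hsat1 : satL σ1 (eqLit x t) :=
        satL_eqLit.2 ⟨d, hσ1x, evalT_mono hext1 t d hd⟩
      obtain ⟨hsattl, hext, hdomf⟩ := ih (x :: done) σ1 σf hdom' hvtl h2
      refine ⟨?_, fun y d' h => hext y d' (hext1 y d' h), ?_⟩
      · intro p hp
        rcases List.mem_cons.1 hp with rfl | hp
        · exact satL_mono_pos hext hsat1
        · exact hsattl p hp
      · intro y
        rw [hdomf y]
        simp only [List.mem_cons, List.map_cons]
        tauto

/-- Completeness for `commEqs`: a successful run exists given a solution. -/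
lemma commEqs_ex (X : Set V) (σ' : Assg V D) :
    ∀ (eqs' : List (V × DTerm V D)) (done : List V) (σ : Assg V D),
    (∀ p ∈ eqs', satL σ' (eqLit p.1 p.2)) →
    (∀ x, (σ x).isSome ↔ (x ∈ X ∨ x ∈ done)) →
    (∀ i (h : i < eqs'.length), ∀ y ∈ varsT (eqs'.get ⟨i, h⟩).2,
        y ∈ X ∨ y ∈ done ∨ y ∈ (eqs'.take i).map Prod.fst) →
    ExtA σ σ' →
    ∃ σf, Steps (commEqs X done eqs', some σ) (.nil, some σf) ∧ ExtA σf σ' := by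
  intro eqs'
  induction eqs' with
  | nil =>
    intro done σ _ _ _ hext
    exact ⟨σ, by rw [commEqs]; exact Relation.ReflTransGen.single Step.skip, hext⟩
  | cons p tl ih =>
    obtain ⟨x, t⟩ := p
    intro done σ hsat hdom hvars hext
    have hv0 : ∀ y ∈ varsT t, y ∈ X ∨ y ∈ done := by
      intro y hy
      have := hvars 0 (by simp) y hy
      simpa using this
    have hvtl : ∀ i (h : i < tl.length), ∀ y ∈ varsT (tl.get ⟨i, h⟩).2,
        y ∈ X ∨ y ∈ x :: done ∨ y ∈ (tl.take i).map Prod.fst := by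
      intro i h y hy
      have := hvars (i + 1) (by simpa using Nat.succ_lt_succ h) y (by simpa using hy)
      simp only [List.take_succ_cons, List.map_cons, List.mem_cons] at this ⊢
      tauto
    obtain ⟨d, hd⟩ := evalT_total t (fun y hy => (hdom y).2 (hv0 y hy))
    obtain ⟨c, hc1, hc2⟩ := satL_eqLit.1 (hsat (x, t) (by simp))
    have hd' : evalT σ' t = some d := evalT_mono hext t d hd
    rw [hd'] at hc2
    cases hc2
    -- now hc1 : σ' x = some d
    by_cases hx : x ∈ X ∨ x ∈ done
    · obtain ⟨e, he⟩ := Option.isSome_iff_exists.1 ((hdom x).2 hx)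
      have hed : e = d := by
        have := hext x e he
        rw [hc1] at this
        exact (Option.some.injEq _ _ ▸ this).symm ▸ rfl
      subst hed
      have hsatx : satL σ (eqLit x t) := satL_eqLit.2 ⟨e, he, hd⟩
      have hdom' : ∀ y, (σ y).isSome ↔ (y ∈ X ∨ y ∈ x :: done) := by
        intro y
        rw [hdom y]
        simp only [List.mem_cons]
        constructor
        · tauto
        · rintro (h | rfl | h) <;> tauto
      obtain ⟨σf, hrun, hextf⟩ := ih (x :: done) σ
        (fun p hp => hsat p (List.mem_cons_of_mem _ hp)) hdom' hvtl hext
      refine ⟨σf, ?_, hextf⟩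
      rw [commEqs, if_pos hx]
      refine compose_seq (by simp) ?_ hrun
      exact Relation.ReflTransGen.head (Step.guardT (sat_litDC.2 hsatx))
        (Relation.ReflTransGen.single Step.skip)
    · have hσx : σ x = none := by
        rw [← Option.not_isSome_iff_eq_none, hdom x]
        tauto
      set σ1 : Assg V D := Function.update σ x (some d) with hσ1
      have hσ1x : σ1 x = some d := by rw [hσ1]; simp
      have hext1 : ExtA σ σ1 := by
        intro y d' hyd
        rcases eq_or_ne y x with rfl | hne
        · rw [hσx] at hyd; exact absurd hyd (by simp)
        · rw [hσ1, Function.update_of_ne hne]; exact hyd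
      have hext1' : ExtA σ1 σ' := by
        intro y d' hyd
        rcases eq_or_ne y x with rfl | hne
        · rw [hσ1x] at hyd; rw [← hyd]; exact hc1
        · rw [hσ1, Function.update_of_ne hne] at hyd; exact hext y d' hyd
      have hdom' : ∀ y, (σ1 y).isSome ↔ (y ∈ X ∨ y ∈ x :: done) := by
        intro y
        rcases eq_or_ne y x with rfl | hne
        · simp [hσ1x]
        · rw [hσ1, Function.update_of_ne hne, hdom y]
          simp only [List.mem_cons]
          tauto
      obtain ⟨σf, hrun, hextf⟩ := ih (x :: done) σ1
        (fun p hp => hsat p (List.mem_cons_of_mem _ hp)) hdom' hvtl hext1'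
      refine ⟨σf, ?_, hextf⟩
      rw [commEqs, if_neg hx]
      refine compose_seq (by simp) ?_ hrun
      have : Function.update σ x (evalT σ t) = σ1 := by rw [hσ1, hd]
      exact this ▸ Relation.ReflTransGen.single Step.assign

lemma commRest_inv : ∀ (ls : List (Lit V D)) (σ σf : Assg V D),
    Steps (commRest ls, some σ) (.nil, some σf) → σf = σ ∧ ∀ l ∈ ls, satL σ l := by
  intro ls
  induction ls with
  | nil =>
    intro σ σf hrun
    rw [commRest] at hrun
    exact ⟨skip_inv hrun, by simp⟩
  | cons l tl ih =>
    intro σ σf hrun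
    rw [commRest] at hrun
    obtain ⟨σ1, h1, h2⟩ := seq_inv hrun _ _ _ rfl
    obtain ⟨hsat, rfl⟩ := guard_skip_inv h1
    obtain ⟨rfl, hrest⟩ := ih σ1 σf h2
    refine ⟨rfl, ?_⟩
    intro l' hl'
    rcases List.mem_cons.1 hl' with rfl | hl'
    · exact sat_litDC.1 hsat
    · exact hrest l' hl'

lemma commRest_ex : ∀ (ls : List (Lit V D)) (σ : Assg V D),
    (∀ l ∈ ls, satL σ l) → Steps (commRest ls, some σ) (.nil, some σ) := by
  intro ls
  induction ls with
  | nil => intro σ _; rw [commRest]; exact Relation.ReflTransGen.single Step.skip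
  | cons l tl ih =>
    intro σ hsat
    rw [commRest]
    refine compose_seq (by simp) ?_ (ih σ (fun l' hl' => hsat l' (List.mem_cons_of_mem _ hl')))
    exact Relation.ReflTransGen.head (Step.guardT (sat_litDC.2 (hsat l (by simp))))
      (Relation.ReflTransGen.single Step.skip)

end Aux4
/-- combined soundness and completeness of commandification, for an
initial assignment σ0 with domain exactly X: (i) every successful run produces a
solution of the literals extending σ0; (ii) if a solution extending σ0 exists, the
run terminates successfully. -/
theorem commandify_sound_complete {V D : Type} [DecidableEq V] (X : Set V)
    (eqs : List (V × DTerm V D)) (rest : List (Lit V D))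
    (hreq : CommReq X eqs rest) (σ0 : Assg V D)
    (hdom : ∀ x, (σ0 x).isSome ↔ x ∈ X) :
    ((∀ σ : Assg V D, Steps (commandify X eqs rest, some σ0) (.nil, some σ) →
        (∀ l ∈ commLits eqs rest, satL σ l) ∧ ∀ x d, σ0 x = some d → σ x = some d) ∧
      ((∃ σ' : Assg V D, (∀ l ∈ commLits eqs rest, satL σ' l) ∧
          ∀ x d, σ0 x = some d → σ' x = some d) →
        ∃ σ : Assg V D, Steps (commandify X eqs rest, some σ0) (.nil, some σ))) := by
  have hdom0 : ∀ x, (σ0 x).isSome ↔ (x ∈ X ∨ x ∈ ([] : List V)) := by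
    intro x; rw [hdom x]; simp
  have hv : ∀ i (h : i < eqs.length), ∀ y ∈ varsT (eqs.get ⟨i, h⟩).2,
      y ∈ X ∨ y ∈ ([] : List V) ∨ y ∈ (eqs.take i).map Prod.fst := by
    intro i h y hy
    rcases hreq.2 i h y hy with h' | h' <;> tauto
  constructor
  · intro σ hrun
    rw [commandify] at hrun
    obtain ⟨σ1, h1, h2⟩ := seq_inv hrun _ _ _ rfl
    obtain ⟨hsateqs, hext, hdomf⟩ := commEqs_inv X eqs [] σ0 σ1 hdom0 hv h1
    obtain ⟨hσeq, hsatrest⟩ := commRest_inv rest σ1 σ h2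
    subst hσeq
    refine ⟨?_, hext⟩
    intro l hl
    rw [commLits] at hl
    rcases List.mem_append.1 hl with hl | hl
    · obtain ⟨p, hp, rfl⟩ := List.mem_map.1 hl
      exact hsateqs p hp
    · exact hsatrest l hl
  · rintro ⟨σ', hsat', hext'⟩
    have hsateqs : ∀ p ∈ eqs, satL σ' (eqLit p.1 p.2) := by
      intro p hp
      apply hsat'
      rw [commLits]
      exact List.mem_append_left _ (List.mem_map.2 ⟨p, hp, rfl⟩)
    obtain ⟨σf, hrun1, hextf⟩ := commEqs_ex X σ' eqs [] σ0 hsateqs hdom0 hv hext'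
    obtain ⟨-, -, hdomf⟩ := commEqs_inv X eqs [] σ0 σf hdom0 hv hrun1
    have hrest : ∀ l ∈ rest, satL σf l := by
      intro l hl
      refine satL_restrict hextf ?_ (hsat' l (by rw [commLits]; exact List.mem_append_right _ hl))
      intro y hy
      have := hreq.1 l (by rw [commLits]; exact List.mem_append_right _ hl) y hy
      rw [hdomf y]
      tauto
    refine ⟨σf, ?_⟩
    rw [commandify]
    exact compose_seq commEqs_ne_nil hrun1 (commRest_ex rest σf hrest)
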